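/- Let D ∈ ℚ[x] be monic, squarefree, of even degree 2g+2 ≥ 4, irreducible over ℚ, with Galois group the full symmetric group S_{2g+2}. Then there are no polynomials a, b ∈ ℚ[x] with b ≠ 0 and a^2 - D·b^2 equal to a nonzero constant; i.e., ℚ[x, √D] has no nontrivial units. -/

import Mathlib

open Polynomial

-- arithmetic: (2g+2)! > 2*((g+1)!)^2 for g ≥ 1
lemma fact_ineq : ∀ g : ℕ, 1 ≤ g → 2 * ((g+1).factorial * (g+1).factorial) < (2*g+2).factorial := by
  intro g hg
  induction g with
  | zero => omega
  | succ n ih =>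
    rcases Nat.eq_or_lt_of_le hg with h | h
    · simp [← h]; decide
    · have hn : 1 ≤ n := by omega
      have H := ih hn
      have A : (2*(n+1)+2).factorial = (2*n+4)*((2*n+3)*(2*n+2).factorial) := by
        rw [show 2*(n+1)+2 = (2*n+3)+1 by ring, Nat.factorial_succ,
          show 2*n+3 = (2*n+2)+1 by ring, Nat.factorial_succ]
      have B : (n+1+1).factorial = (n+2)*(n+1).factorial := Nat.factorial_succ (n+1)
      rw [A, B]
      have hpos : 0 < (2*n+2).factorial := Nat.factorial_pos _
      calc 2 * ((n+2) * (n+1).factorial * ((n+2) * (n+1).factorial))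
          = (n+2)*(n+2) * (2*((n+1).factorial*(n+1).factorial)) := by ring
        _ < (n+2)*(n+2) * (2*n+2).factorial :=
            mul_lt_mul_of_pos_left H (by positivity)
        _ ≤ ((2*n+4)*(2*n+3)) * (2*n+2).factorial :=
            Nat.mul_le_mul_right _ (by nlinarith)
        _ = (2*n+4)*((2*n+3)*(2*n+2).factorial) := by ring


lemma card_rootSet_le {F E : Type*} [Field F] [Field E] [Algebra F E] (p : F[X]) :
    Fintype.card (p.rootSet E) ≤ p.natDegree := by
  classical
  rw [← Set.toFinset_card]
  have h1 : (p.rootSet E).toFinset = (p.aroots E).toFinset := by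
    simp [rootSet_def]
  rw [h1]
  calc (p.aroots E).toFinset.card ≤ (p.aroots E).card := Multiset.toFinset_card_le _
    _ ≤ (p.map (algebraMap F E)).natDegree := card_roots' _
    _ ≤ p.natDegree := natDegree_map_le

lemma factorial_mul_factorial_le {i j : ℕ} (hi : 1 ≤ i) (hj : 1 ≤ j) :
    i.factorial * j.factorial ≤ (i + j - 1).factorial := by
  induction i with
  | zero => omega
  | succ m ih =>
    by_cases hm : m = 0
    · subst hm
      simp [show 0 + 1 + j - 1 = j by omega]
    · have hm1 : 1 ≤ m := by omega
      have H := ih hm1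
      have e1 : m + 1 + j - 1 = (m + j - 1) + 1 := by omega
      rw [e1, Nat.factorial_succ, Nat.factorial_succ]
      calc (m+1) * m.factorial * j.factorial = (m+1) * (m.factorial * j.factorial) := by ring
        _ ≤ (m+1) * (m + j - 1).factorial := Nat.mul_le_mul_left _ H
        _ ≤ (m + j - 1 + 1) * (m + j - 1).factorial := Nat.mul_le_mul_right _ (by omega)

set_option maxHeartbeats 1000000 in
lemma key_square (g : ℕ) (D : ℚ[X]) (hD : D.Monic) (hsf : Squarefree D)
    (hdeg : D.natDegree = 2*g + 2) (hdeg4 : 4 ≤ 2*g + 2)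
    (hirr : Irreducible D)
    (hgal : Nonempty (D.Gal ≃* Equiv.Perm (Fin (2*g + 2))))
    (a b : ℚ[X]) (k : ℚ) (h : a^2 - D * b^2 = C k) : ∃ s : ℚ, s^2 = k := by
  classical
  by_contra hns
  push_neg at hns
  have hD0 : D ≠ 0 := hD.ne_zero
  obtain ⟨e⟩ := hgal
  have hsep : D.Separable := (PerfectField.separable_iff_squarefree).mpr hsf
  haveI : IsGalois ℚ D.SplittingField := by
    have h := @IsGalois.of_separable_splitting_field _ _ _ _ _ D (Polynomial.IsSplittingField.splittingField D) hsep
    convert h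
    exact Subsingleton.elim _ _
  set L := D.SplittingField with hL
  have hdeg0 : D.degree ≠ 0 := by
    intro hc
    rw [degree_eq_natDegree hD0, hdeg] at hc
    have : (2*g+2 : ℕ) = 0 := by exact_mod_cast hc
    omega
  obtain ⟨α, hα0⟩ := (SplittingField.splits D).exists_eval_eq_zero (by rwa [degree_map])
  have hα : aeval α D = 0 := by rwa [aeval_def, eval₂_eq_eval_map]
  set a' : ℚ[X] := a %ₘ D with ha'
  set β : L := aeval α a' with hβdef
  have haa' : aeval α a' = aeval α a := by
    conv_rhs => rw [← Polynomial.modByMonic_add_div a D]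
    simp [hα]
    rfl
  have hβ2 : β^2 = algebraMap ℚ L k := by
    have h1 := congrArg (aeval α) h
    simp only [map_sub, map_mul, map_pow, hα, aeval_C, zero_mul, sub_zero] at h1
    rw [hβdef, haa', h1]
  have hβnr : ∀ s : ℚ, algebraMap ℚ L s ≠ β := by
    intro s hs
    apply hns s
    have h2 : algebraMap ℚ L (s^2) = algebraMap ℚ L k := by rw [map_pow, hs]; exact hβ2
    exact (algebraMap ℚ L).injective h2
  have hβint : IsIntegral ℚ β := IsIntegral.of_finite ℚ β
  have hβmin : (minpoly ℚ β).natDegree = 2 := by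
    have hXk : (X^2 - C k : ℚ[X]) ≠ 0 := X_pow_sub_C_ne_zero (by norm_num) k
    have hdvd : minpoly ℚ β ∣ (X^2 - C k) :=
      minpoly.dvd _ _ (by simp only [map_sub, map_pow, aeval_X, aeval_C, hβ2, sub_self])
    have hle : (minpoly ℚ β).natDegree ≤ 2 := by
      have h3 := Polynomial.natDegree_le_of_dvd hdvd hXk
      rwa [natDegree_X_pow_sub_C] at h3
    have hne1 : (minpoly ℚ β).natDegree ≠ 1 := by
      intro h1
      obtain ⟨s, hs⟩ := minpoly.natDegree_eq_one_iff.mp h1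
      exact hβnr s hs
    have hpos : 0 < (minpoly ℚ β).natDegree := minpoly.natDegree_pos hβint
    omega
  -- the quadratic field F
  set F : IntermediateField ℚ L := IntermediateField.adjoin ℚ {β} with hF
  have hF2 : Module.finrank ℚ F = 2 := by
    rw [IntermediateField.adjoin.finrank hβint, hβmin]
  -- minpoly of α over F
  have hαintF : IsIntegral F α := IsIntegral.of_finite F α
  set P : Polynomial F := minpoly F α with hP
  have hP0 : P ≠ 0 := minpoly.ne_zero hαintF
  have hPdvd : P ∣ D.map (algebraMap ℚ F) :=
    minpoly.dvd _ _ (by rw [aeval_map_algebraMap]; exact hα)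
  obtain ⟨Q, hPQ⟩ := hPdvd
  have hDm0 : D.map (algebraMap ℚ F) ≠ 0 := by
    simpa using (Polynomial.map_ne_zero_iff (algebraMap ℚ F).injective).mpr hD0
  have hQ0 : Q ≠ 0 := by rintro rfl; rw [mul_zero] at hPQ; exact hDm0 hPQ
  have hDmdeg : (D.map (algebraMap ℚ F)).natDegree = 2*g+2 := by
    rw [natDegree_map, hdeg]
  have hPpos : 1 ≤ P.natDegree := minpoly.natDegree_pos hαintF
  -- β as an element of F
  have hβF : β ∈ F := IntermediateField.mem_adjoin_simple_self ℚ β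
  set βF : F := ⟨β, hβF⟩ with hβFdef
  have hβFL : algebraMap F L βF = β := rfl
  -- P divides a'.map - C βF, which is nonzero of degree < 2g+2
  have hnz : a'.map (algebraMap ℚ F) - C βF ≠ 0 := by
    intro hc
    have h20 : a'.map (algebraMap ℚ F) = C βF := by
      have := sub_eq_zero.mp hc; exact this
    have h21 : a'.natDegree = 0 := by
      have := congrArg natDegree h20
      rwa [natDegree_map, natDegree_C] at this
    obtain ⟨c, hcc⟩ := Polynomial.natDegree_eq_zero.mp h21
    have h22 : algebraMap ℚ F c = βF := by
      have := h20
      rw [← hcc, map_C] at this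
      exact C_injective this
    apply hβnr c
    have := congrArg (algebraMap F L) h22
    rwa [← IsScalarTower.algebraMap_apply, hβFL] at this
  have hroot2 : aeval α (a'.map (algebraMap ℚ F) - C βF) = 0 := by
    rw [map_sub, aeval_map_algebraMap, aeval_C, hβFL, ← hβdef, sub_self]
  have hPdvd2 : P ∣ (a'.map (algebraMap ℚ F) - C βF) := minpoly.dvd _ _ hroot2
  have ha'deg : a'.natDegree < 2*g+2 := by
    rw [← hdeg]
    apply natDegree_modByMonic_lt a hD
    intro hD1
    rw [hD1] at hdeg
    simp at hdeg
  have hPle : P.natDegree ≤ 2*g+1 := by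
    have h4 := Polynomial.natDegree_le_of_dvd hPdvd2 hnz
    have h5 : (a'.map (algebraMap ℚ F) - C βF).natDegree ≤ 2*g+1 := by
      refine le_trans (natDegree_sub_le _ _) ?_
      simp only [natDegree_C, natDegree_map]
      omega
    omega
  have hsum : P.natDegree + Q.natDegree = 2*g+2 := by
    rw [← hDmdeg, hPQ, natDegree_mul hP0 hQ0]
  have hQpos : 1 ≤ Q.natDegree := by omega
  -- Galois counting
  haveI : FiniteDimensional F L := FiniteDimensional.right ℚ F L
  haveI : IsGalois F L := IsGalois.tower_top_of_isGalois ℚ F L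
  have hcard2 : Fintype.card (L ≃ₐ[F] L) = Module.finrank F L :=
    by rw [← Nat.card_eq_fintype_card]; exact IsGalois.card_aut_eq_finrank F L
  have hcardL : Module.finrank ℚ L = Nat.factorial (2*g+2) := by
    have h7 : Fintype.card D.Gal = Module.finrank ℚ L :=
      by rw [← Nat.card_eq_fintype_card]; exact Polynomial.Gal.card_of_separable hsep
    have h8 : Fintype.card D.Gal = Nat.factorial (2*g+2) := by
      rw [Fintype.card_congr e.toEquiv, Fintype.card_perm, Fintype.card_fin]
    rw [← h7, h8]
  have htower : Module.finrank ℚ F * Module.finrank F L = Module.finrank ℚ L :=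
    Module.finrank_mul_finrank ℚ F L
  -- the injective map into pairs of embeddings of root sets
  have hmaps : ∀ (p : Polynomial F) (σ : L ≃ₐ[F] L) (x : L),
      x ∈ p.rootSet L → σ x ∈ p.rootSet L := by
    intro p σ x hx
    rw [mem_rootSet] at hx ⊢
    exact ⟨hx.1, by rw [aeval_algHom_apply σ x p, hx.2, map_zero]⟩
  set Ψ : (L ≃ₐ[F] L) → ((P.rootSet L ↪ P.rootSet L) × (Q.rootSet L ↪ Q.rootSet L)) :=
    fun σ =>
      (⟨fun x => ⟨σ x.1, hmaps P σ x.1 x.2⟩,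
        fun x y hxy => Subtype.ext (σ.injective (congrArg Subtype.val hxy))⟩,
       ⟨fun x => ⟨σ x.1, hmaps Q σ x.1 x.2⟩,
        fun x y hxy => Subtype.ext (σ.injective (congrArg Subtype.val hxy))⟩) with hΨ
  have hΨinj : Function.Injective Ψ := by
    intro σ τ hστ
    have hfst := congrArg Prod.fst hστ
    have hsnd := congrArg Prod.snd hστ
    have hroots : ∀ x ∈ D.rootSet L, σ x = τ x := by
      intro x hx
      rw [mem_rootSet] at hx
      have h9 : aeval x (D.map (algebraMap ℚ F)) = 0 := by
        rw [aeval_map_algebraMap]; exact hx.2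
      rw [hPQ, map_mul] at h9
      rcases mul_eq_zero.mp h9 with h10 | h10
      · have hxP : x ∈ P.rootSet L := (mem_rootSet).mpr ⟨hP0, h10⟩
        have h11 := congrFun (congrArg (fun (f : P.rootSet L ↪ P.rootSet L) => (f : P.rootSet L → P.rootSet L)) hfst) ⟨x, hxP⟩
        exact congrArg Subtype.val h11
      · have hxQ : x ∈ Q.rootSet L := (mem_rootSet).mpr ⟨hQ0, h10⟩
        have h11 := congrFun (congrArg (fun (f : Q.rootSet L ↪ Q.rootSet L) => (f : Q.rootSet L → Q.rootSet L)) hsnd) ⟨x, hxQ⟩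
        exact congrArg Subtype.val h11
    have hadj : Algebra.adjoin ℚ (D.rootSet L) = ⊤ := SplittingField.adjoin_rootSet D
    set s : L →ₐ[ℚ] L := (σ.toAlgHom.restrictScalars ℚ) with hs
    set t : L →ₐ[ℚ] L := (τ.toAlgHom.restrictScalars ℚ) with ht
    have h11 : Algebra.adjoin ℚ (D.rootSet L) ≤ AlgHom.equalizer s t :=
      Algebra.adjoin_le (fun x hx => hroots x hx)
    apply AlgEquiv.ext
    intro x
    have hx : x ∈ AlgHom.equalizer s t := h11 (by rw [hadj]; trivial)
    exact hx
  have hle2 : Fintype.card (L ≃ₐ[F] L)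
      ≤ Fintype.card ((P.rootSet L ↪ P.rootSet L) × (Q.rootSet L ↪ Q.rootSet L)) :=
    Fintype.card_le_of_injective Ψ hΨinj
  have hcardprod : Fintype.card ((P.rootSet L ↪ P.rootSet L) × (Q.rootSet L ↪ Q.rootSet L))
      = Nat.factorial (Fintype.card (P.rootSet L)) * Nat.factorial (Fintype.card (Q.rootSet L)) := by
    rw [Fintype.card_prod, Fintype.card_embedding_eq, Fintype.card_embedding_eq,
      Nat.descFactorial_self, Nat.descFactorial_self]
  have hfinal : Fintype.card (L ≃ₐ[F] L) ≤ Nat.factorial (2*g+1) := by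
    have hcP : Fintype.card (P.rootSet L) ≤ P.natDegree := card_rootSet_le P
    have hcQ : Fintype.card (Q.rootSet L) ≤ Q.natDegree := card_rootSet_le Q
    have hb1 : Nat.factorial (Fintype.card (P.rootSet L)) * Nat.factorial (Fintype.card (Q.rootSet L))
        ≤ Nat.factorial P.natDegree * Nat.factorial Q.natDegree :=
      Nat.mul_le_mul (Nat.factorial_le hcP) (Nat.factorial_le hcQ)
    have hb2 : Nat.factorial P.natDegree * Nat.factorial Q.natDegree
        ≤ Nat.factorial (P.natDegree + Q.natDegree - 1) :=
      factorial_mul_factorial_le hPpos hQpos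
    rw [hsum] at hb2
    have : (2*g+2-1) = 2*g+1 := by omega
    rw [this] at hb2
    omega
  -- contradiction
  have hchain : Nat.factorial (2*g+2) ≤ 2 * Nat.factorial (2*g+1) := by
    have h30 : Module.finrank F L ≤ Nat.factorial (2*g+1) := by
      rw [← hcard2]; exact hfinal
    have h31 : 2 * Module.finrank F L = Nat.factorial (2*g+2) := by
      rw [← hcardL, ← htower, hF2]
    omega
  have hstep : Nat.factorial (2*g+2) = (2*g+2) * Nat.factorial (2*g+1) := by
    rw [show 2*g+2 = (2*g+1)+1 by omega, Nat.factorial_succ]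
  have hpos1 : 0 < Nat.factorial (2*g+1) := Nat.factorial_pos _
  nlinarith [hchain, hstep, hpos1, hdeg4]

lemma descent (g : ℕ) (D : ℚ[X]) (hD : D.Monic) (hsf : Squarefree D)
    (hdeg : D.natDegree = 2*g + 2) (hdeg4 : 4 ≤ 2*g + 2)
    (hirr : Irreducible D)
    (hgal : Nonempty (D.Gal ≃* Equiv.Perm (Fin (2*g + 2)))) :
    ∀ n : ℕ, ∀ a b : ℚ[X], ∀ k : ℚ, b ≠ 0 → k ≠ 0 → a^2 - D * b^2 = C k →
      b.natDegree = n → False := by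
  intro n
  induction n using Nat.strong_induction_on with
  | _ n ih =>
  intro a b k hb hk h hn
  have hD0 : D ≠ 0 := hD.ne_zero
  -- k is a square
  obtain ⟨s₀, hs₀⟩ := key_square g D hD hsf hdeg hdeg4 hirr hgal a b k h
  have hs₀0 : s₀ ≠ 0 := by rintro rfl; rw [← hs₀] at hk; simp at hk
  -- D divides a - C s₀ or a + C s₀
  have hfac : (a - C s₀) * (a + C s₀) = D * b^2 := by
    have hCk : C k = (C s₀)^2 := by rw [← hs₀, map_pow]
    rw [hCk] at h
    linear_combination h
  have hprime : Prime D := UniqueFactorizationMonoid.irreducible_iff_prime.mp hirr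
  have hdvd : D ∣ (a - C s₀) * (a + C s₀) := ⟨b^2, hfac⟩
  -- uniform: get s with s^2 = k and D ∣ a - C s
  obtain ⟨s, hs, hsne, hDdvd⟩ : ∃ s : ℚ, s^2 = k ∧ s ≠ 0 ∧ D ∣ (a - C s) := by
    rcases hprime.2.2 _ _ hdvd with h1 | h1
    · exact ⟨s₀, hs₀, hs₀0, h1⟩
    · refine ⟨-s₀, by rw [neg_pow]; simpa using hs₀, neg_ne_zero.mpr hs₀0, ?_⟩
      simpa [sub_neg_eq_add] using h1
  obtain ⟨q, hq⟩ := hDdvd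
  -- b^2 = q * r with r = D*q + C(2*s)
  set r : ℚ[X] := D * q + C (2*s) with hr
  have h2s : C (2*s) = 2 * C s := by rw [C_mul]; congr 1
  have hbqr : b^2 = q * r := by
    have hCk : C k = (C s)^2 := by rw [← hs, map_pow]
    have h2 : D * b^2 = D * (q * (D*q + 2 * C s)) := by
      linear_combination (-1 : ℚ[X])*h + (a + D*q + C s)*hq - hCk
    have h3 : q * r = q * (D*q + 2 * C s) := by rw [hr, h2s]
    exact mul_left_cancel₀ hD0 (by rw [h3]; exact h2)
  have hb2 : b^2 ≠ 0 := pow_ne_zero _ hb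
  have hq0 : q ≠ 0 := by rintro rfl; rw [zero_mul] at hbqr; exact hb2 hbqr
  have hr0 : r ≠ 0 := by intro h0; rw [h0, mul_zero] at hbqr; exact hb2 hbqr
  -- coprimality
  have hcop : IsCoprime q r := by
    have hunit : IsUnit (C (2*s)) := isUnit_C.mpr (by simp [hsne])
    obtain ⟨w, hw⟩ := hunit
    have h1 : IsCoprime q (C (2*s)) := ⟨0, (↑w⁻¹ : ℚ[X]), by rw [← hw]; simp⟩
    have h4 := h1.add_mul_left_right D
    have h5 : C (2*s) + q * D = r := by rw [hr]; ring
    rwa [h5] at h4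
  -- extract squares
  obtain ⟨d, hd⟩ := exists_associated_pow_of_mul_eq_pow' hcop hbqr.symm
  obtain ⟨d', hd'⟩ := exists_associated_pow_of_mul_eq_pow' hcop.symm
    (by rw [mul_comm]; exact hbqr.symm)
  obtain ⟨u, hu⟩ := hd
  obtain ⟨u', hu'⟩ := hd'
  obtain ⟨u₀, hu₀, hu₀C⟩ := Polynomial.isUnit_iff.mp u.isUnit
  obtain ⟨u₁, hu₁, hu₁C⟩ := Polynomial.isUnit_iff.mp u'.isUnit
  have hqd : q = C u₀ * d^2 := by rw [hu₀C, ← hu]; ring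
  have hrd : r = C u₁ * d'^2 := by rw [hu₁C, ← hu']; ring
  have hd0 : d ≠ 0 := by rintro rfl; rw [hqd] at hq0; simp at hq0
  have hd'0 : d' ≠ 0 := by rintro rfl; rw [hrd] at hr0; simp at hr0
  have hu₀0 : u₀ ≠ 0 := hu₀.ne_zero
  have hu₁0 : u₁ ≠ 0 := hu₁.ne_zero
  -- extract μ with μ^2 = u₀ * u₁
  have hbm : b^2 = C (u₀*u₁) * (d*d')^2 := by rw [hbqr, hqd, hrd, map_mul]; ring
  have hmdvd : (d*d') ∣ b := by
    have h2 : (d*d')^2 ∣ b^2 := ⟨C (u₀*u₁), by rw [hbm]; ring⟩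
    exact (IsIntegrallyClosed.pow_dvd_pow_iff (two_ne_zero)).mp h2
  obtain ⟨t, ht⟩ := hmdvd
  have hdd'0 : d * d' ≠ 0 := mul_ne_zero hd0 hd'0
  have ht2 : t^2 = C (u₀*u₁) := by
    have : (d*d')^2 * t^2 = (d*d')^2 * C (u₀*u₁) := by
      rw [← mul_pow, ← ht, hbm]; ring
    exact mul_left_cancel₀ (pow_ne_zero _ hdd'0) this
  have htdeg : t.natDegree = 0 := by
    have : 2 * t.natDegree = 0 := by
      have := congrArg natDegree ht2
      rwa [natDegree_pow, natDegree_C] at this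
    omega
  obtain ⟨μ, hμ⟩ := Polynomial.natDegree_eq_zero.mp htdeg
  have hμ2 : μ^2 = u₀ * u₁ := by
    have : C (μ^2) = C (u₀*u₁) := by rw [map_pow, hμ, ht2]
    exact C_injective this
  have hμ0 : μ ≠ 0 := by rintro rfl; simp at hμ2; exact hu₀0 (by tauto)
  -- new solution: (C μ * d')^2 - D * (C u₀ * d)^2 = C (2*s*u₀)
  have heqr : C u₁ * d'^2 - D * (C u₀ * d^2) = C (2*s) := by
    rw [← hrd, ← hqd, hr]; ring
  have hμC : (C μ)^2 = C u₀ * C u₁ := by rw [← map_pow, hμ2, map_mul]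
  have hnew : (C μ * d')^2 - D * (C u₀ * d)^2 = C (2*s*u₀) := by
    have : C (2*s*u₀) = C u₀ * C (2*s) := by rw [← map_mul]; ring_nf
    rw [this, ← heqr]
    linear_combination d'^2 * hμC
  have he0 : C u₀ * d ≠ 0 := mul_ne_zero (by simpa using hu₀0) hd0
  have hk'0 : 2*s*u₀ ≠ 0 := by simp [hsne, hu₀0]
  -- degree bookkeeping
  have hdegq : q.natDegree = 2 * d.natDegree := by
    rw [hqd, natDegree_C_mul hu₀0, natDegree_pow]
  have hdegr : r.natDegree = (2*g+2) + q.natDegree := by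
    rw [hr, natDegree_add_C, natDegree_mul hD0 hq0, hdeg]
  have hdegb : 2 * b.natDegree = q.natDegree + r.natDegree := by
    have := congrArg natDegree hbqr
    rwa [natDegree_pow, natDegree_mul hq0 hr0] at this
  have hlt : (C u₀ * d).natDegree < n := by
    rw [natDegree_C_mul hu₀0]
    omega
  exact ih _ hlt (C μ * d') (C u₀ * d) (2*s*u₀) he0 hk'0 hnew rfl

theorem stmt_13 (g : ℕ) (D : ℚ[X]) (hD : D.Monic) (hsf : Squarefree D)
    (hdeg : D.natDegree = 2*g + 2) (hdeg4 : 4 ≤ 2*g + 2)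
    (hirr : Irreducible D)
    (hgal : Nonempty (D.Gal ≃* Equiv.Perm (Fin (2*g + 2)))) :
    ¬ ∃ a b : ℚ[X], b ≠ 0 ∧ ∃ k : ℚ, k ≠ 0 ∧ a^2 - D * b^2 = C k := by
  rintro ⟨a, b, hb, k, hk, h⟩
  exact descent g D hD hsf hdeg hdeg4 hirr hgal b.natDegree a b k hb hk h rfl
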